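/- In the minimal highway cover labelling of a connected graph G with landmark set R, the label of any vertex v ∈ V∖R contains the entry (r, d_G(r,v)) for a landmark r if and only if no shortest path between r and v passes through a landmark other than r. Consequently |L(v)| ≤ |R| for every vertex v. -/

import Mathlib

open scoped Classical

variable {V : Type*}

namespace BatchHL

/-- `l` is a walk in `G` from `r` to `v`, given as its (nonempty) list of visited vertices. -/
def IsWalk (G : SimpleGraph V) (r v : V) (l : List V) : Prop :=
  l ≠ [] ∧ l.head? = some r ∧ l.getLast? = some v ∧ l.Chain' G.Adj

/-- The length (number of edges) of a walk given as a list of vertices. -/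
def len (l : List V) : ℕ := l.length - 1

/-- The walk `l` passes through the (undirected) edge `(a, b)`. -/
def Passes (l : List V) (a b : V) : Prop :=
  (a, b) ∈ l.zip l.tail ∨ (b, a) ∈ l.zip l.tail

/-- `P_G(r,v)`: the set of all shortest paths between `r` and `v` in `G`. -/
def SPaths (G : SimpleGraph V) (r v : V) : Set (List V) :=
  {l | IsWalk G r v l ∧ ∀ l', IsWalk G r v l' → l.length ≤ l'.length}

/-- `(a,b)` is an edge deleted by the batch update turning `G` into `G'`. -/
def DeletedEdge (G G' : SimpleGraph V) (a b : V) : Prop := G.Adj a b ∧ ¬ G'.Adj a b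

/-- `(a,b)` is an edge inserted by the batch update turning `G` into `G'`. -/
def InsertedEdge (G G' : SimpleGraph V) (a b : V) : Prop := G'.Adj a b ∧ ¬ G.Adj a b

/-- `(a,b)` is an edge of the batch update `B` turning `G` into `G'`. -/
def UpdatedEdge (G G' : SimpleGraph V) (a b : V) : Prop :=
  InsertedEdge G G' a b ∨ DeletedEdge G G' a b

/-- The walk `l` passes through a deleted edge. -/
def PassesDeleted (G G' : SimpleGraph V) (l : List V) : Prop :=
  ∃ a b, DeletedEdge G G' a b ∧ Passes l a b

/-- The walk `l` passes through an inserted edge. -/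
def PassesInserted (G G' : SimpleGraph V) (l : List V) : Prop :=
  ∃ a b, InsertedEdge G G' a b ∧ Passes l a b

/-- `v` is affected w.r.t. landmark `r` iff the set of shortest paths changes. -/
def Affected (G G' : SimpleGraph V) (r v : V) : Prop := SPaths G r v ≠ SPaths G' r v

/-- A composite path from `r` to `v`: a prefix lying in `G` followed by a suffix lying in `G'`. -/
def IsComposite (G G' : SimpleGraph V) (r v : V) (l : List V) : Prop :=
  ∃ w l₁ l₂, IsWalk G r w l₁ ∧ IsWalk G' w v l₂ ∧ l = l₁ ++ l₂.tail

/-- A significant composite path: a composite path whose `G`-prefix passes through a deleted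
edge and whose `G'`-suffix passes through an inserted edge. -/
def IsSigComposite (G G' : SimpleGraph V) (r v : V) (l : List V) : Prop :=
  ∃ w l₁ l₂, IsWalk G r w l₁ ∧ IsWalk G' w v l₂ ∧ l = l₁ ++ l₂.tail ∧
    PassesDeleted G G' l₁ ∧ PassesInserted G G' l₂

/-- `v` is composite-path affected w.r.t. `r`. -/
def CPAffected (G G' : SimpleGraph V) (r v : V) : Prop :=
  Affected G G' r v ∨ ∃ l, IsSigComposite G G' r v l ∧ (len l : ℕ∞) ≤ G.edist r v

/-- A distance labelling: each label entry `(r, δ) ∈ L v` satisfies `δ = d_G(r,v)`. -/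
def IsLabelling (G : SimpleGraph V) (L : V → Set (V × ℕ∞)) : Prop :=
  ∀ v r δ, (r, δ) ∈ L v → δ = G.edist r v

/-- A 2-hop cover labelling: a distance labelling such that every pair `s, t` has a common
hub `r` lying on a shortest path between `s` and `t`. -/
def Is2HopCover (G : SimpleGraph V) (L : V → Set (V × ℕ∞)) : Prop :=
  IsLabelling G L ∧ ∀ s t : V, ∃ r, (r, G.edist r s) ∈ L s ∧ (r, G.edist r t) ∈ L t ∧
    G.edist s r + G.edist r t = G.edist s t

/-- A highway cover labelling `Γ = (H, L)` over `G` with landmarks `R`.  The highway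
distances `δ_H(r,r_i)` are by definition the graph distances `d_G(r,r_i)`. -/
def IsHighwayCover (G : SimpleGraph V) (R : Set V) (L : V → Set (V × ℕ∞)) : Prop :=
  (∀ v r δ, (r, δ) ∈ L v → r ∈ R ∧ δ = G.edist r v) ∧
  ∀ v, v ∉ R → ∀ r ∈ R,
    G.edist r v = sInf {x | ∃ ri δ, (ri, δ) ∈ L v ∧ x = δ + G.edist r ri}

/-- The landmark length / landmark distance values: `⊤` for "no path", otherwise a pair of a
length and a landmark flag (a `Prop`). -/
abbrev LLen := WithTop (ℕ × Prop)

/-- Lexicographic order on landmark lengths, with flag ordering `True < False`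
(i.e. `x ≤ y` at equal length iff `y`'s flag implies `x`'s flag). -/
def llLe : LLen → LLen → Prop
  | _, none => True
  | none, some _ => False
  | some a, some b => a.1 < b.1 ∨ (a.1 = b.1 ∧ (b.2 → a.2))

/-- Strict lexicographic order on landmark lengths. -/
def llLt (x y : LLen) : Prop := llLe x y ∧ ¬ llLe y x

/-- The extension operator `⊕`: `(d,l) ⊕ w = (d+1, True)` if `w ∈ R∖{r}`, else `(d+1, l)`. -/
def oplus (R : Set V) (r : V) : LLen → V → LLen
  | none, _ => none
  | some a, w => some (a.1 + 1, (w ∈ R ∧ w ≠ r) ∨ a.2)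

/-- The landmark length `lml(l)` of a walk `l` starting at `r`: its length together with the
flag recording whether it passes through a landmark other than `r`. -/
def lmLen (R : Set V) (r : V) (l : List V) : LLen :=
  some (len l, ∃ w ∈ l, w ∈ R ∧ w ≠ r)

/-- The landmark distance `d^L_G(r,v)`: the lexicographically minimal landmark length of a
walk from `r` to `v` (with `True < False` on flags), `⊤` if there is none.  Explicitly, its
length component is the minimal walk length and its flag holds iff some walk of minimal
length passes through a landmark other than `r`. -/
noncomputable def lmDist (G : SimpleGraph V) (R : Set V) (r v : V) : LLen :=
  if ∃ l, IsWalk G r v l then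
    some (sInf {n | ∃ l, IsWalk G r v l ∧ len l = n},
      ∃ l, IsWalk G r v l ∧ len l = sInf {n | ∃ l', IsWalk G r v l' ∧ len l' = n} ∧
        ∃ w ∈ l, w ∈ R ∧ w ≠ r)
  else ⊤

/-- Order on extended landmark lengths `(landmark length, deletion flag)`, lexicographic with
`True < False` on the deletion flag. -/
def ellLe (x y : LLen × Prop) : Prop := llLt x.1 y.1 ∨ (x.1 = y.1 ∧ (y.2 → x.2))

/-- Strict order on extended landmark lengths. -/
def ellLt (x y : LLen × Prop) : Prop := ellLe x y ∧ ¬ ellLe y x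

/-- `β(r,v) = (d^L_G(r,v), True)`. -/
noncomputable def beta (G : SimpleGraph V) (R : Set V) (r v : V) : LLen × Prop :=
  (lmDist G R r v, True)

/-- The distance bound `d_bou(u, S)` of `u` w.r.t. `S` in `G'`. -/
noncomputable def dbou (G' : SimpleGraph V) (r : V) (S : Set V) (u : V) : ℕ∞ :=
  ⨅ (w : V) (_ : G'.Adj u w ∧ w ∉ S), (G'.edist r w + 1)

/-- The set `{ d^L_{G'}(r,w) ⊕ v | w ∈ N_{G'}(v) ∖ S }`, whose lexicographic minimum is the
landmark distance bound `d^L_bou(v,S)`. -/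
noncomputable def lmBouSet (G' : SimpleGraph V) (R : Set V) (r v : V) (S : Set V) :
    Set LLen :=
  {x | ∃ w, G'.Adj v w ∧ w ∉ S ∧ x = oplus R r (lmDist G' R r w) v}

/-- The subgraph `G[V ∖ R]` obtained by removing all landmarks (landmarks become isolated). -/
def removeLandmarks (G : SimpleGraph V) (R : Set V) : SimpleGraph V where
  Adj u w := G.Adj u w ∧ u ∉ R ∧ w ∉ R
  symm := ⟨fun u w ⟨h, hu, hw⟩ => ⟨h.symm, hw, hu⟩⟩
  loopless := ⟨fun u ⟨h, _, _⟩ => G.loopless.irrefl u h⟩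

private lemma exists_walk_of_isWalk {G : SimpleGraph V} (l : List V) :
    ∀ r v : V, IsWalk G r v l → ∃ p : G.Walk r v, p.support = l := by
  induction l with
  | nil => exact fun r v h => absurd rfl h.1
  | cons a t ih =>
    intro r v h
    obtain ⟨-, h1, h2, hc⟩ := h
    have har : a = r := by simpa using h1
    subst har
    cases t with
    | nil =>
      have : a = v := by simpa using h2
      subst this
      exact ⟨.nil, rfl⟩
    | cons b t' =>
      unfold List.Chain' at hc; rw [List.isChain_cons_cons] at hc
      have h2' : (b :: t').getLast? = some v := by
        rwa [List.getLast?_cons_cons] at h2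
      obtain ⟨q, hq⟩ := ih b v ⟨List.cons_ne_nil _ _, rfl, h2', hc.2⟩
      exact ⟨SimpleGraph.Walk.cons hc.1 q, by rw [SimpleGraph.Walk.support_cons, hq]⟩

private lemma isWalk_support {G : SimpleGraph V} {r v : V} (p : G.Walk r v) :
    IsWalk G r v p.support :=
  ⟨p.support_ne_nil,
   by rw [List.head?_eq_head p.support_ne_nil, p.head_support],
   by rw [List.getLast?_eq_getLast p.support_ne_nil, p.getLast_support],
   p.isChain_adj_support⟩

private lemma len_support {G : SimpleGraph V} {r v : V} (p : G.Walk r v) :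
    len p.support = p.length := by
  simp [len, SimpleGraph.Walk.length_support]

private lemma onpath_iff {G : SimpleGraph V} (hG : G.Connected) (r v w : V) :
    (G.edist r w + G.edist w v = G.edist r v) ↔
      ∃ p : G.Walk r v, (p.length : ℕ∞) = G.edist r v ∧ w ∈ p.support := by
  constructor
  · intro h
    obtain ⟨p₁, hp₁⟩ := (hG r w).exists_walk_length_eq_edist
    obtain ⟨p₂, hp₂⟩ := (hG w v).exists_walk_length_eq_edist
    refine ⟨p₁.append p₂, ?_, ?_⟩
    · rw [SimpleGraph.Walk.length_append]; push_cast; rw [hp₁, hp₂, h]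
    · rw [SimpleGraph.Walk.mem_support_append_iff]
      exact Or.inl p₁.end_mem_support
  · rintro ⟨p, hp, hw⟩
    have h1 : G.edist r w ≤ ((p.takeUntil w hw).length : ℕ∞) := SimpleGraph.edist_le _
    have h2 : G.edist w v ≤ ((p.dropUntil w hw).length : ℕ∞) := SimpleGraph.edist_le _
    have h3 : (p.takeUntil w hw).length + (p.dropUntil w hw).length = p.length := by
      have := congrArg SimpleGraph.Walk.length (p.take_spec hw)
      rwa [SimpleGraph.Walk.length_append] at this
    refine le_antisymm ?_ SimpleGraph.edist_triangle
    calc G.edist r w + G.edist w v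
        ≤ (((p.takeUntil w hw).length + (p.dropUntil w hw).length : ℕ) : ℕ∞) := by
          push_cast; exact add_le_add h1 h2
      _ = (p.length : ℕ∞) := by rw [h3]
      _ = G.edist r v := hp

/-- The candidate minimal highway cover labelling. -/
noncomputable def minL (G : SimpleGraph V) (R : Set V) : V → Set (V × ℕ∞) := fun v =>
  if v ∈ R then ∅ else
    {p | ∃ r ∈ R, p = (r, G.edist r v) ∧
      ¬ ∃ w ∈ R, w ≠ r ∧ G.edist r w + G.edist w v = G.edist r v}

private lemma minL_entries {G : SimpleGraph V} {R : Set V} {v r : V} {δ : ℕ∞}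
    (h : (r, δ) ∈ minL G R v) : r ∈ R ∧ δ = G.edist r v := by
  unfold minL at h
  split_ifs at h with hv
  · exact absurd h (Set.notMem_empty _)
  · obtain ⟨r', hr', heq, -⟩ := h
    obtain ⟨rfl, rfl⟩ := Prod.mk.injEq .. ▸ heq
    exact ⟨hr', rfl⟩

private lemma minL_isHighwayCover {G : SimpleGraph V} (hG : G.Connected) (R : Set V) :
    IsHighwayCover G R (minL G R) := by
  constructor
  · exact fun v r δ h => minL_entries h
  · intro v hv r hr
    have hfin : ∀ a b : V, G.edist a b ≠ ⊤ := fun a b =>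
      SimpleGraph.edist_ne_top_iff_reachable.mpr (hG a b)
    -- find the landmark on a shortest r-v path closest to v
    set T : Set ℕ∞ := {d | ∃ r' ∈ R, G.edist r' v = d ∧ G.edist r r' + G.edist r' v = G.edist r v}
      with hT
    have hrT : G.edist r v ∈ T := ⟨r, hr, rfl, by rw [SimpleGraph.edist_self, zero_add]⟩
    have hm_le : sInf T ≤ G.edist r v := sInf_le hrT
    have hm_ne : sInf T ≠ ⊤ := fun h => hfin r v (top_le_iff.mp (h ▸ hm_le))
    have : sInf T < sInf T + 1 := (ENat.lt_add_one_iff hm_ne).mpr le_rfl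
    obtain ⟨d, hdT, hdlt⟩ := sInf_lt_iff.mp this
    have hdm : d = sInf T := le_antisymm ((ENat.lt_add_one_iff hm_ne).mp hdlt) (sInf_le hdT)
    obtain ⟨r', hr'R, hr'd, hr'eq⟩ := hdT
    have hmem : (r', G.edist r' v) ∈ minL G R v := by
      unfold minL
      rw [if_neg hv]
      refine ⟨r', hr'R, rfl, ?_⟩
      rintro ⟨w, hwR, hwne, hweq⟩
      have hwv_le : G.edist w v ≤ G.edist r' v := le_add_self.trans hweq.le
      have hrw : G.edist r w + G.edist w v = G.edist r v := by
        refine le_antisymm ?_ SimpleGraph.edist_triangle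
        calc G.edist r w + G.edist w v
            ≤ (G.edist r r' + G.edist r' w) + G.edist w v :=
              add_le_add_left SimpleGraph.edist_triangle _
          _ = G.edist r r' + (G.edist r' w + G.edist w v) := add_assoc _ _ _
          _ = G.edist r r' + G.edist r' v := by rw [hweq]
          _ = G.edist r v := hr'eq
      have hwT : G.edist w v ∈ T := ⟨w, hwR, rfl, hrw⟩
      have hge : G.edist r' v ≤ G.edist w v := by
        rw [hr'd, hdm]; exact sInf_le hwT
      have : G.edist r' w + G.edist r' v ≤ 0 + G.edist r' v := by
        rw [zero_add]
        calc G.edist r' w + G.edist r' v ≤ G.edist r' w + G.edist w v :=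
              add_le_add_right hge _
          _ = G.edist r' v := hweq
      have h0 : G.edist r' w ≤ 0 := (WithTop.add_le_add_iff_right (hfin r' v)).mp this
      exact hwne (SimpleGraph.edist_eq_zero_iff.mp (le_antisymm h0 zero_le)).symm
    refine le_antisymm (le_sInf ?_) (sInf_le ?_)
    · rintro x ⟨ri, δ, hri, rfl⟩
      obtain ⟨hriR, rfl⟩ := minL_entries hri
      calc G.edist r v ≤ G.edist r ri + G.edist ri v := SimpleGraph.edist_triangle
        _ = G.edist ri v + G.edist r ri := add_comm _ _
    · exact ⟨r', G.edist r' v, hmem, by rw [add_comm, hr'eq]⟩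

/-- In the minimal highway cover labelling of a connected graph `G` with
landmark set `R`, the label of a vertex `v ∈ V∖R` contains `(r, d_G(r,v))` iff no shortest
path between `r` and `v` passes through a landmark other than `r`.  Consequently
`|L(v)| ≤ |R|` for every vertex `v`. -/
theorem minimal_label_membership (G : SimpleGraph V) (hG : G.Connected)
    (R : Set V) (hR : R.Finite) (L : V → Set (V × ℕ∞))
    (hL : IsHighwayCover G R L)
    (hmin : ∀ L', IsHighwayCover G R L' → ∀ u, L u ⊆ L' u) :
    (∀ v, v ∉ R → ∀ r ∈ R,
      ((r, G.edist r v) ∈ L v ↔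
        ¬ ∃ l, IsWalk G r v l ∧ (len l : ℕ∞) = G.edist r v ∧ ∃ w ∈ l, w ∈ R ∧ w ≠ r)) ∧
    ∀ v, (L v).ncard ≤ R.ncard := by
  have hfin : ∀ a b : V, G.edist a b ≠ ⊤ := fun a b =>
    SimpleGraph.edist_ne_top_iff_reachable.mpr (hG a b)
  have hsub : ∀ u, L u ⊆ minL G R u := hmin _ (minL_isHighwayCover hG R)
  constructor
  · intro v hv r hr
    constructor
    · -- forward direction
      intro hmem
      have hmem' := hsub v hmem
      unfold minL at hmem'
      rw [if_neg hv] at hmem'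
      obtain ⟨r', hr', heq, hcond⟩ := hmem'
      obtain ⟨rfl, -⟩ := Prod.mk.injEq .. ▸ heq
      rintro ⟨l, hl, hlen, w, hwl, hwR, hwne⟩
      obtain ⟨p, hp⟩ := exists_walk_of_isWalk l r v hl
      have hplen : (p.length : ℕ∞) = G.edist r v := by
        rw [← len_support p, hp]; exact hlen
      have hws : w ∈ p.support := hp ▸ hwl
      exact hcond ⟨w, hwR, hwne, (onpath_iff hG r v w).mpr ⟨p, hplen, hws⟩⟩
    · -- backward direction
      intro hno
      have hcond : ¬ ∃ w ∈ R, w ≠ r ∧ G.edist r w + G.edist w v = G.edist r v := by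
        rintro ⟨w, hwR, hwne, heq⟩
        obtain ⟨p, hplen, hws⟩ := (onpath_iff hG r v w).mp heq
        exact hno ⟨p.support, isWalk_support p,
          by rw [len_support p]; exact hplen, w, hws, hwR, hwne⟩
      have hinf := hL.2 v hv r hr
      have hlt : sInf {x | ∃ ri δ, (ri, δ) ∈ L v ∧ x = δ + G.edist r ri}
          < G.edist r v + 1 := by
        rw [← hinf]; exact (ENat.lt_add_one_iff (hfin r v)).mpr le_rfl
      obtain ⟨x, hxS, hxlt⟩ := sInf_lt_iff.mp hlt
      have hxle : x ≤ G.edist r v := (ENat.lt_add_one_iff (hfin r v)).mp hxlt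
      have hxge : G.edist r v ≤ x := hinf ▸ sInf_le hxS
      have hxeq : x = G.edist r v := le_antisymm hxle hxge
      obtain ⟨ri, δ, hriL, rfl⟩ := hxS
      obtain ⟨hriR, rfl⟩ := hL.1 v ri δ hriL
      rcases eq_or_ne ri r with rfl | hne
      · exact hriL
      · exact absurd ⟨ri, hriR, hne, by rw [add_comm] at hxeq; exact hxeq⟩ hcond
  · intro v
    have h1 : L v ⊆ (fun r => (r, G.edist r v)) '' R := by
      rintro ⟨r, δ⟩ hmem
      obtain ⟨hrR, rfl⟩ := hL.1 v r δ hmem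
      exact ⟨r, hrR, rfl⟩
    calc (L v).ncard ≤ ((fun r => (r, G.edist r v)) '' R).ncard :=
          Set.ncard_le_ncard h1 (hR.image _)
      _ ≤ R.ncard := Set.ncard_image_le hR

end BatchHL
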